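/- arXiv:2002.11230 — 2 statements merged into one kernel-verified Lean document; each statement's English description precedes it below -/
import Mathlib

section
/- Let Γ be a group, R a unital Γ-graded ring, γ₁,…,γₙ ∈ Γ, and δ ∈ Γ such that the component R_δ contains an element invertible in R. Then the graded matrix rings Mₙ(R)(γ₁,γ₂,…,γₙ) and Mₙ(R)(γ₁δ,γ₂,…,γₙ) are graded isomorphic. -/
open Pointwise

structure RingGrading (Γ : Type) [Group Γ] (R : Type) [Ring R] where
  component : Γ → AddSubgroup R
  one_mem : (1 : R) ∈ component 1
  mul_mem : ∀ {γ δ : Γ} {a b : R}, a ∈ component γ → b ∈ component δ →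
    a * b ∈ component (γ * δ)
  iSup_eq_top : (⨆ γ : Γ, component γ) = ⊤
  independent : iSupIndep component

variable {Γ : Type} [Group Γ] {R : Type} [Ring R]

def matrixComponent (g : RingGrading Γ R) (n : ℕ) (γv : Fin n → Γ) (δ : Γ) :
    AddSubgroup (Matrix (Fin n) (Fin n) R) where
  carrier := {M | ∀ i j, M i j ∈ g.component ((γv i)⁻¹ * δ * γv j)}
  add_mem' := by
    intro a b ha hb i j
    simpa [Matrix.add_apply] using add_mem (ha i j) (hb i j)
  zero_mem' := by
    intro i j
    simpa using zero_mem (g.component ((γv i)⁻¹ * δ * γv j))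
  neg_mem' := by
    intro a ha i j
    simpa [Matrix.neg_apply] using neg_mem (ha i j)

/-- A `Γ`-graded ring (given by its components) is strongly graded if
`R_γ R_δ = R_{γδ}` for all `γ, δ`; since the inclusion `R_γ R_δ ⊆ R_{γδ}` always
holds in a graded ring, this is the nontrivial inclusion. -/
def StronglyGraded {S : Type} [Ring S] (c : Γ → AddSubgroup S) : Prop :=
  ∀ γ δ : Γ, c (γ * δ) ≤ AddSubgroup.closure ((c γ : Set S) * (c δ : Set S))

/-- A unital graded ring is a crossed product if every component contains an invertible
element. -/
def IsCrossedProduct {S : Type} [Ring S] (c : Γ → AddSubgroup S) : Prop :=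
  ∀ γ : Γ, ∃ u : Sˣ, (u : S) ∈ c γ

/-- Graded unit-regular: every `a ∈ R_γ` satisfies `a = a u a` for some unit `u ∈ R_{γ⁻¹}`. -/
def GradedUnitRegular {S : Type} [Ring S] (c : Γ → AddSubgroup S) : Prop :=
  ∀ (γ : Γ) (a : S), a ∈ c γ → ∃ u : Sˣ, (u : S) ∈ c γ⁻¹ ∧ a = a * u * a

/-- A `Γ`-graded division ring: a graded ring in which every nonzero homogeneous element
is invertible. -/
structure GradedDivRing (Γ : Type) [Group Γ] (K : Type) [Ring K] extends
    RingGrading Γ K where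
  isUnit_of_homogeneous : ∀ {γ : Γ} {a : K}, a ∈ component γ → a ≠ 0 → IsUnit a

/-- The support `Γ_R = {γ | R_γ ≠ 0}` of a grading. -/
def RingGrading.support (g : RingGrading Γ R) : Set Γ := {γ : Γ | g.component γ ≠ ⊥}

def IsGradedIso {Γ R S : Type} [AddGroup R] [Mul R] [AddGroup S] [Mul S]
    (cR : Γ → AddSubgroup R) (cS : Γ → AddSubgroup S) : Prop :=
  ∃ e : R ≃+* S, ∀ (γ : Γ) (x : R), x ∈ cR γ ↔ e x ∈ cS γ

/-- The identity component `R_ε` of the graded matrix ring, as a subring. -/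
def matrixIdentitySubring (g : RingGrading Γ R) (n : ℕ) (γv : Fin n → Γ) :
    Subring (Matrix (Fin n) (Fin n) R) where
  carrier := matrixComponent g n γv 1
  add_mem' := add_mem
  zero_mem' := zero_mem _
  neg_mem' := neg_mem
  one_mem' := by
    intro i j
    by_cases h : i = j
    · subst h
      rw [Matrix.one_apply_eq]
      have hh : (γv i)⁻¹ * 1 * γv i = 1 := by group
      rw [hh]; exact g.one_mem
    · rw [Matrix.one_apply_ne h]
      exact zero_mem _
  mul_mem' := by
    intro a b ha hb i j
    show (a * b) i j ∈ _
    rw [Matrix.mul_apply]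
    refine AddSubgroup.sum_mem _ fun k _ => ?_
    have h := g.mul_mem (ha i k) (hb k j)
    have hh : (γv i)⁻¹ * 1 * γv k * ((γv k)⁻¹ * 1 * γv j) = (γv i)⁻¹ * 1 * γv j := by group
    rwa [hh] at h

/-- The degree-`γ` component `A·γ` of the group ring `A[Γ]`. -/
def monoidAlgebraComponent (A : Type) [Ring A] (Γ : Type) [Group Γ] (γ : Γ) :
    AddSubgroup (MonoidAlgebra A Γ) where
  carrier := {f | ∀ δ : Γ, δ ≠ γ → f.coeff δ = 0}
  add_mem' := by
    intro f h hf hh δ hδ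
    show (f + h).coeff δ = 0
    rw [MonoidAlgebra.coeff_add, Finsupp.add_apply, hf δ hδ, hh δ hδ, add_zero]
  zero_mem' := fun δ _ => rfl
  neg_mem' := by
    intro f hf δ hδ
    show (-f).coeff δ = 0
    rw [MonoidAlgebra.coeff_neg, Finsupp.neg_apply, hf δ hδ, neg_zero]

open DirectSum

lemma RingGrading.isInternal [DecidableEq Γ] (g : RingGrading Γ R) :
    DirectSum.IsInternal (fun γ => (g.component γ).toIntSubmodule) := by
  apply DirectSum.isInternal_submodule_of_iSupIndep_of_iSup_eq_top
  · exact g.independent.map_orderIso AddSubgroup.toIntSubmodule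
  · rw [← OrderIso.map_iSup AddSubgroup.toIntSubmodule, g.iSup_eq_top]
    exact map_top _

lemma RingGrading.inv_mem (g : RingGrading Γ R) {δ : Γ} (u : Rˣ)
    (hu : (u : R) ∈ g.component δ) : ((u⁻¹ : Rˣ) : R) ∈ g.component δ⁻¹ := by
  classical
  set p : Γ → Submodule ℤ R := fun γ => (g.component γ).toIntSubmodule with hp
  have hI := g.isInternal
  obtain ⟨x, hx⟩ := hI.surjective ((u⁻¹ : Rˣ) : R)
  let mulU : ∀ γ : Γ, p γ →+ p (γ * δ) := fun γ =>
    { toFun := fun a => ⟨(a : R) * u, g.mul_mem a.2 hu⟩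
      map_zero' := by ext; simp
      map_add' := by intro a b; ext; simp [add_mul] }
  let S : (⨁ γ, p γ) →+ (⨁ γ, p γ) :=
    DirectSum.toAddMonoid fun γ => (DirectSum.of (fun γ => p γ) (γ * δ)).comp (mulU γ)
  let ev : ∀ β : Γ, (⨁ γ, p γ) →+ p β := fun β => DFinsupp.evalAddMonoidHom β
  have hcoe : ∀ y : ⨁ γ, p γ,
      DirectSum.coeAddMonoidHom p (S y) = DirectSum.coeAddMonoidHom p y * u := by
    intro y
    have h : (DirectSum.coeAddMonoidHom p).comp S
        = (AddMonoidHom.mulRight (u : R)).comp (DirectSum.coeAddMonoidHom p) := by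
      apply DirectSum.addHom_ext
      intro γ a
      simp [S, mulU, DirectSum.toAddMonoid_of]
    exact DFunLike.congr_fun h y
  have hone : (1 : R) ∈ p (1 : Γ) := g.one_mem
  have hSx : S x = DirectSum.of (fun γ => p γ) (1 : Γ) ⟨1, hone⟩ := by
    apply hI.injective
    rw [hcoe]
    have h1 : DirectSum.coeAddMonoidHom p x = ((u⁻¹ : Rˣ) : R) := hx
    rw [h1]
    simp
    exact (DirectSum.coeAddMonoidHom_of p (1 : Γ) ⟨1, hone⟩).symm
  have hcomp : ∀ γ : Γ, (S x) (γ * δ) = mulU γ (x γ) := by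
    intro γ
    have h : (ev (γ * δ)).comp S = (mulU γ).comp (ev γ) := by
      apply DirectSum.addHom_ext
      intro β a
      show (S (DirectSum.of (fun γ => p γ) β a)) (γ * δ)
          = mulU γ ((DirectSum.of (fun γ => p γ) β a) γ)
      rw [show S (DirectSum.of (fun γ => p γ) β a)
          = DirectSum.of (fun γ => p γ) (β * δ) (mulU β a) from
        DirectSum.toAddMonoid_of _ _ _]
      by_cases hb : β = γ
      · subst hb; rw [DirectSum.of_eq_same, DirectSum.of_eq_same]
      · rw [DirectSum.of_eq_of_ne _ _ _ (by simpa using Ne.symm hb),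
          DirectSum.of_eq_of_ne _ _ _ (Ne.symm hb), map_zero]
    exact DFunLike.congr_fun h x
  have hzero : ∀ γ : Γ, γ ≠ δ⁻¹ → x γ = 0 := by
    intro γ hγ
    have h2 : (S x) (γ * δ) = 0 := by
      rw [hSx, DirectSum.of_eq_of_ne]
      intro h
      exact hγ (eq_inv_of_mul_eq_one_left h)
    have h3 := hcomp γ
    rw [h2] at h3
    have h4 : (x γ : R) * u = 0 := by
      simpa [mulU] using congrArg Subtype.val h3.symm
    exact Subtype.ext ((Units.mul_left_eq_zero u).mp h4)
  have hxx : x = DirectSum.of (fun γ => p γ) δ⁻¹ (x δ⁻¹) := by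
    apply DFinsupp.ext
    intro γ
    by_cases hγ : γ = δ⁻¹
    · subst hγ; rw [DirectSum.of_eq_same]
    · rw [hzero γ hγ, DirectSum.of_eq_of_ne _ _ _ hγ]
  have hfin : ((u⁻¹ : Rˣ) : R) = (x δ⁻¹ : R) := by
    rw [← hx, hxx]
    simp
    exact DirectSum.coeAddMonoidHom_of _ _ _
  rw [hfin]
  exact (x δ⁻¹).2


/-- If `R` is a unital `Γ`-graded ring and `R_δ` contains an invertible
element, then `Mₙ(R)(γ₁, γ₂, …, γₙ) ≅_gr Mₙ(R)(γ₁δ, γ₂, …, γₙ)`. -/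
theorem matrix_grading_unit_shift {Γ : Type} [Group Γ] {R : Type} [Ring R]
    (g : RingGrading Γ R) {n : ℕ} (γv : Fin (n + 1) → Γ) (δ : Γ)
    (u : Rˣ) (hu : (u : R) ∈ g.component δ) :
    IsGradedIso (matrixComponent g (n + 1) γv)
      (matrixComponent g (n + 1) (Function.update γv 0 (γv 0 * δ))) := by
  classical
  set γv' := Function.update γv 0 (γv 0 * δ) with hγv'
  have hui : ((u⁻¹ : Rˣ) : R) ∈ g.component δ⁻¹ := g.inv_mem u hu
  have L1 : ∀ (α : Γ) (x : R),
      x ∈ g.component α ↔ ((u⁻¹ : Rˣ) : R) * x ∈ g.component (δ⁻¹ * α) := by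
    intro α x
    constructor
    · exact fun h => g.mul_mem hui h
    · intro h
      have h2 := g.mul_mem hu h
      rw [show δ * (δ⁻¹ * α) = α by group] at h2
      rwa [show (u : R) * (((u⁻¹ : Rˣ) : R) * x) = x by
        rw [← mul_assoc, Units.mul_inv, one_mul]] at h2
  have L2 : ∀ (α : Γ) (x : R),
      x ∈ g.component α ↔ x * (u : R) ∈ g.component (α * δ) := by
    intro α x
    constructor
    · exact fun h => g.mul_mem h hu
    · intro h
      have h2 := g.mul_mem h hui
      rw [show α * δ * δ⁻¹ = α by group] at h2
      rwa [show x * (u : R) * ((u⁻¹ : Rˣ) : R) = x by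
        rw [mul_assoc, Units.mul_inv, mul_one]] at h2
  set d : Fin (n + 1) → R := fun i => if i = 0 then ((u⁻¹ : Rˣ) : R) else 1 with hd
  set d' : Fin (n + 1) → R := fun i => if i = 0 then (u : R) else 1 with hd'
  set D : Matrix (Fin (n + 1)) (Fin (n + 1)) R := Matrix.diagonal d with hD
  set D' : Matrix (Fin (n + 1)) (Fin (n + 1)) R := Matrix.diagonal d' with hD2
  have hdd' : D * D' = 1 := by
    rw [hD, hD2, Matrix.diagonal_mul_diagonal]
    have : (fun i => d i * d' i) = fun _ => (1 : R) := by
      funext i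
      by_cases h : i = 0 <;> simp [hd, hd', h]
    rw [this, Matrix.diagonal_one]
  have hd'd : D' * D = 1 := by
    rw [hD, hD2, Matrix.diagonal_mul_diagonal]
    have : (fun i => d' i * d i) = fun _ => (1 : R) := by
      funext i
      by_cases h : i = 0 <;> simp [hd, hd', h]
    rw [this, Matrix.diagonal_one]
  have cancel1 : ∀ X : Matrix (Fin (n + 1)) (Fin (n + 1)) R, D' * (D * X) = X := by
    intro X; rw [← mul_assoc, hd'd, one_mul]
  have cancel2 : ∀ X : Matrix (Fin (n + 1)) (Fin (n + 1)) R, D * (D' * X) = X := by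
    intro X; rw [← mul_assoc, hdd', one_mul]
  refine ⟨{ toFun := fun M => D * M * D'
            invFun := fun M => D' * M * D
            left_inv := by
              intro M
              simp only [mul_assoc]
              rw [hd'd, mul_one, ← mul_assoc, hd'd, one_mul]
            right_inv := by
              intro M
              simp only [mul_assoc]
              rw [hdd', mul_one, ← mul_assoc, hdd', one_mul]
            map_mul' := by
              intro A B
              simp only [mul_assoc]
              rw [cancel1]
            map_add' := by
              intro A B
              show D * (A + B) * D' = D * A * D' + D * B * D'
              rw [Matrix.mul_add, Matrix.add_mul] }, ?_⟩
  intro σ M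
  simp only [RingEquiv.coe_mk, Equiv.coe_fn_mk]
  have hentry : ∀ i j, (D * M * D') i j = d i * M i j * d' j := by
    intro i j
    rw [hD, hD2, Matrix.mul_diagonal, Matrix.diagonal_mul]
  have key : ∀ (i j : Fin (n + 1)) (x : R),
      x ∈ g.component ((γv i)⁻¹ * σ * γv j) ↔
        d i * x * d' j ∈ g.component ((γv' i)⁻¹ * σ * γv' j) := by
    intro i j x
    by_cases hi : i = 0 <;> by_cases hj : j = 0
    · subst hi; subst hj
      simp only [hd, hd', if_pos rfl, hγv', Function.update_self]
      rw [L2 _ x, L1 _ _, show δ⁻¹ * ((γv 0)⁻¹ * σ * γv 0 * δ)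
        = (γv 0 * δ)⁻¹ * σ * (γv 0 * δ) by group]
      simp only [mul_assoc]
    · subst hi
      simp only [hd, hd', if_pos rfl, if_neg hj, hγv', Function.update_self,
        Function.update_of_ne hj, mul_one]
      rw [L1 _ x, show δ⁻¹ * ((γv 0)⁻¹ * σ * γv j)
        = (γv 0 * δ)⁻¹ * σ * γv j by group]
    · subst hj
      simp only [hd, hd', if_pos rfl, if_neg hi, hγv', Function.update_self,
        Function.update_of_ne hi, one_mul]
      rw [L2 _ x, show (γv i)⁻¹ * σ * γv 0 * δ
        = (γv i)⁻¹ * σ * (γv 0 * δ) by group]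
    · simp only [hd, hd', if_neg hi, if_neg hj, hγv',
        Function.update_of_ne hi, Function.update_of_ne hj, one_mul, mul_one]
  constructor
  · intro h i j
    rw [hentry i j]
    exact (key i j _).mp (h i j)
  · intro h i j
    have := h i j
    rw [hentry i j] at this
    exact (key i j _).mpr this
end

section
/- Let K be a field, m and n positive integers, and γ₁,…,γₙ integers. For each j ∈ {0,…,m−1} let k_j be the number of indices i with γᵢ ≡ j (mod m). Then the ℤ-graded ring R = Mₙ(K[x^m, x^{−m}])(γ₁,…,γₙ) is strongly graded if and only if k_j > 0 for every j ∈ {0,…,m−1}. -/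
open Pointwise

noncomputable section

def matrixComponentZ {R : Type} [Ring R] (c : ℤ → AddSubgroup R) (n : ℕ)
    (γv : Fin n → ℤ) (δ : ℤ) : AddSubgroup (Matrix (Fin n) (Fin n) R) where
  carrier := {M | ∀ i j, M i j ∈ c (-(γv i) + δ + γv j)}
  add_mem' := by
    intro a b ha hb i j
    simpa [Matrix.add_apply] using add_mem (ha i j) (hb i j)
  zero_mem' := by
    intro i j
    simpa using zero_mem (c (-(γv i) + δ + γv j))
  neg_mem' := by
    intro a ha i j
    simpa [Matrix.neg_apply] using neg_mem (ha i j)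

/-- The graded field `K[x^m, x^{-m}]`, realized as the Laurent polynomial ring
`AddMonoidAlgebra K ℤ` in which the basis element `single k` stands for `x^{m k}`.
Its degree-`d` component is `K·x^d` if `m ∣ d` (i.e. `d = m k`) and `0` otherwise. -/
def laurentComponent (K : Type) [Field K] (m : ℕ) (d : ℤ) :
    AddSubgroup (AddMonoidAlgebra K ℤ) where
  carrier := {f | ∀ k : ℤ, (m : ℤ) * k ≠ d → f.coeff k = 0}
  add_mem' := by
    intro f h hf hh k hk
    show (f.coeff + h.coeff) k = 0
    rw [Finsupp.add_apply, hf k hk, hh k hk, add_zero]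
  zero_mem' := fun k _ => rfl
  neg_mem' := by
    intro f hf k hk
    show (-f.coeff) k = 0
    rw [Finsupp.neg_apply, hf k hk, neg_zero]

theorem laurentComponent_mul {K : Type} [Field K] {m : ℕ} {a b : ℤ}
    {f g : AddMonoidAlgebra K ℤ} (hf : f ∈ laurentComponent K m a)
    (hg : g ∈ laurentComponent K m b) : f * g ∈ laurentComponent K m (a + b) := by
  intro k hk
  by_contra hne
  have hks : k ∈ (f * g).coeff.support := Finsupp.mem_support_iff.mpr hne
  have hmem := AddMonoidAlgebra.support_coeff_mul_subset f g hks
  rw [Finset.mem_add] at hmem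
  obtain ⟨k₁, hk₁, k₂, hk₂, hsum⟩ := hmem
  have h1 : (m : ℤ) * k₁ = a := by
    by_contra h
    exact (Finsupp.mem_support_iff.mp hk₁) (hf k₁ h)
  have h2 : (m : ℤ) * k₂ = b := by
    by_contra h
    exact (Finsupp.mem_support_iff.mp hk₂) (hg k₂ h)
  exact hk (by rw [← hsum, mul_add, h1, h2])

def StronglyGradedZ {S : Type} [Ring S] (c : ℤ → AddSubgroup S) : Prop :=
  ∀ a b : ℤ, c (a + b) ≤ AddSubgroup.closure ((c a : Set S) * (c b : Set S))

def IsCrossedProductZ {S : Type} [Ring S] (c : ℤ → AddSubgroup S) : Prop :=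
  ∀ d : ℤ, ∃ u : Sˣ, (u : S) ∈ c d

def IsSkewGroupRingZ {S : Type} [Ring S] (c : ℤ → AddSubgroup S) : Prop :=
  ∃ σ : ℤ → Sˣ, (∀ a b : ℤ, σ (a + b) = σ a * σ b) ∧ ∀ d : ℤ, ((σ d : Sˣ) : S) ∈ c d

/-- The degree-zero component of `Mₙ(K[x^m, x^{-m}])(γ₁, …, γₙ)`, as a subring. -/
def laurentMatrixZeroSubring (K : Type) [Field K] (m n : ℕ) (γv : Fin n → ℤ) :
    Subring (Matrix (Fin n) (Fin n) (AddMonoidAlgebra K ℤ)) where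
  carrier := matrixComponentZ (laurentComponent K m) n γv 0
  add_mem' := add_mem
  zero_mem' := zero_mem _
  neg_mem' := neg_mem
  one_mem' := by
    intro i j
    by_cases h : i = j
    · subst h
      rw [Matrix.one_apply_eq]
      have hh : -(γv i) + 0 + γv i = 0 := by ring
      rw [hh]
      intro k hk
      have hk0 : k ≠ 0 := by
        intro h0; exact hk (by rw [h0, mul_zero])
      show ((AddMonoidAlgebra.single (0 : ℤ) (1 : K))).coeff k = 0
      exact Finsupp.single_eq_of_ne' (Ne.symm hk0)
    · rw [Matrix.one_apply_ne h]
      exact zero_mem _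
  mul_mem' := by
    intro a b ha hb i j
    show (a * b) i j ∈ _
    rw [Matrix.mul_apply]
    refine AddSubgroup.sum_mem _ fun k _ => ?_
    have h := laurentComponent_mul (ha i k) (hb k j)
    have hh : -(γv i) + 0 + γv k + (-(γv k) + 0 + γv j) = -(γv i) + 0 + γv j := by ring
    rwa [hh] at h

/-- The degree-`d` component `A·d` of the group ring `A[ℤ]`. -/
def addMonoidAlgebraComponentZ (A : Type) [Ring A] (d : ℤ) :
    AddSubgroup (AddMonoidAlgebra A ℤ) where
  carrier := {f | ∀ k : ℤ, k ≠ d → f.coeff k = 0}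
  add_mem' := by
    intro f h hf hh k hk
    show (f.coeff + h.coeff) k = 0
    rw [Finsupp.add_apply, hf k hk, hh k hk, add_zero]
  zero_mem' := fun k _ => rfl
  neg_mem' := by
    intro f hf k hk
    show (-f.coeff) k = 0
    rw [Finsupp.neg_apply, hf k hk, neg_zero]

section Aux

variable {K : Type} [Field K] {m n : ℕ} {γv : Fin n → ℤ}

lemma single_mem_laurent (k : ℤ) (c : K) :
    AddMonoidAlgebra.single k c ∈ laurentComponent K m ((m : ℤ) * k) := by
  intro k' hk'
  exact Finsupp.single_eq_of_ne' (fun h => hk' (by rw [h]))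

lemma mc_mul {a b : ℤ} {x y : Matrix (Fin n) (Fin n) (AddMonoidAlgebra K ℤ)}
    (hx : x ∈ matrixComponentZ (laurentComponent K m) n γv a)
    (hy : y ∈ matrixComponentZ (laurentComponent K m) n γv b) :
    x * y ∈ matrixComponentZ (laurentComponent K m) n γv (a + b) := by
  intro i j
  show (x * y) i j ∈ _
  rw [Matrix.mul_apply]
  refine AddSubgroup.sum_mem _ fun k _ => ?_
  have h := laurentComponent_mul (hx i k) (hy k j)
  have hh : -(γv i) + a + γv k + (-(γv k) + b + γv j) = -(γv i) + (a + b) + γv j := by ring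
  rwa [hh] at h

lemma mc_one :
    (1 : Matrix (Fin n) (Fin n) (AddMonoidAlgebra K ℤ)) ∈
      matrixComponentZ (laurentComponent K m) n γv 0 := by
  intro i j
  by_cases h : i = j
  · subst h
    rw [Matrix.one_apply_eq]
    have hh : -(γv i) + 0 + γv i = (m : ℤ) * 0 := by ring
    rw [hh]
    exact single_mem_laurent 0 1
  · rw [Matrix.one_apply_ne h]
    exact zero_mem _

lemma stdBasis_mem {i j : Fin n} {d k : ℤ} (hk : (m : ℤ) * k = -(γv i) + d + γv j) (c : K) :
    Matrix.single i j (AddMonoidAlgebra.single k c) ∈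
      matrixComponentZ (laurentComponent K m) n γv d := by
  intro p q
  by_cases h : i = p ∧ j = q
  · obtain ⟨rfl, rfl⟩ := h
    rw [Matrix.single_apply_same, ← hk]
    exact single_mem_laurent k c
  · rw [Matrix.single_apply_of_ne _ _ _ _ _ h]
    exact zero_mem _

end Aux

/-- `Mₙ(K[x^m, x^{-m}])(γ₁, …, γₙ)` is strongly graded iff each of the
counts `k_j = #{i | γᵢ ≡ j (mod m)}`, `j = 0, …, m-1`, is positive. -/
theorem laurentMatrix_stronglyGraded_iff (K : Type) [Field K] (m n : ℕ) (hm : 0 < m)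
    (hn : 0 < n) (γv : Fin n → ℤ) :
    StronglyGradedZ (matrixComponentZ (laurentComponent K m) n γv) ↔
      ∀ j : ℕ, j < m → 0 < {i : Fin n | γv i % (m : ℤ) = (j : ℤ)}.ncard := by
  set c := matrixComponentZ (laurentComponent K m) n γv with hc
  constructor
  · intro hsg j hj
    rw [Set.ncard_pos (Set.toFinite _)]
    by_contra hemp
    rw [Set.not_nonempty_iff_eq_empty] at hemp
    have hno : ∀ i : Fin n, γv i % (m : ℤ) ≠ (j : ℤ) := by
      intro i hi
      exact absurd (hemp ▸ hi : i ∈ (∅ : Set (Fin n))) (Set.notMem_empty i)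
    set i₀ : Fin n := ⟨0, hn⟩
    set δ : ℤ := γv i₀ - j with hδ
    have h1 : (1 : Matrix (Fin n) (Fin n) (AddMonoidAlgebra K ℤ)) ∈ c (δ + (-δ)) := by
      rw [add_neg_cancel]; exact mc_one
    have hcl := hsg δ (-δ) h1
    -- subgroup of matrices with vanishing i₀ row
    set T : AddSubgroup (Matrix (Fin n) (Fin n) (AddMonoidAlgebra K ℤ)) :=
      { carrier := {X | ∀ ℓ, X i₀ ℓ = 0}
        add_mem' := by intro a b ha hb ℓ; simp [Matrix.add_apply, ha ℓ, hb ℓ]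
        zero_mem' := by intro ℓ; simp
        neg_mem' := by intro a ha ℓ; simp [Matrix.neg_apply, ha ℓ] } with hT
    have hsub : (((c δ : AddSubgroup _) : Set _) * ((c (-δ) : AddSubgroup _) : Set _)) ⊆ (T : Set (Matrix (Fin n) (Fin n) (AddMonoidAlgebra K ℤ))) := by
      rintro x hx
      rw [Set.mem_mul] at hx
      obtain ⟨M, hM, N, hN, rfl⟩ := hx
      intro ℓ
      have hMrow : ∀ q, M i₀ q = 0 := by
        intro q
        have hq := hM i₀ q
        refine AddMonoidAlgebra.ext (Finsupp.ext ?_)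
        intro k
        refine hq k ?_
        intro hk
        have hdvd : (m : ℤ) ∣ γv q - j := ⟨k, by rw [hδ] at hk; linarith⟩
        obtain ⟨t, ht⟩ := hdvd
        have : γv q % (m : ℤ) = (j : ℤ) := by
          have hq' : γv q = (j : ℤ) + (m : ℤ) * t := by linarith
          rw [hq', Int.add_mul_emod_self_left]
          exact Int.emod_eq_of_lt (by positivity) (by exact_mod_cast hj)
        exact hno q this
      show (M * N) i₀ ℓ = 0
      rw [Matrix.mul_apply]
      exact Finset.sum_eq_zero fun q _ => by rw [hMrow q, zero_mul]
    have h1T : (1 : Matrix (Fin n) (Fin n) (AddMonoidAlgebra K ℤ)) ∈ T :=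
      (AddSubgroup.closure_le T).mpr hsub hcl
    have h11 : (1 : Matrix (Fin n) (Fin n) (AddMonoidAlgebra K ℤ)) i₀ i₀ = 0 := h1T i₀
    rw [Matrix.one_apply_eq] at h11
    have h0 : (1 : AddMonoidAlgebra K ℤ).coeff 0 = 0 := by rw [h11]; rfl
    rw [AddMonoidAlgebra.one_def, AddMonoidAlgebra.coeff_single, Finsupp.single_eq_same] at h0
    exact one_ne_zero h0
  · intro hres
    have key : ∀ d : ℤ, (1 : Matrix (Fin n) (Fin n) (AddMonoidAlgebra K ℤ)) ∈
        AddSubgroup.closure ((c d : Set _) * (c (-d) : Set _)) := by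
      intro d
      have hchoice : ∀ i : Fin n, ∃ j : Fin n, (m : ℤ) ∣ (-(γv i) + d + γv j) := by
        intro i
        set r : ℤ := (γv i - d) % (m : ℤ) with hr
        have hr0 : 0 ≤ r := Int.emod_nonneg _ (by positivity)
        have hrm : r < (m : ℤ) := Int.emod_lt_of_pos _ (by exact_mod_cast hm)
        have hrn : r.toNat < m := by omega
        obtain ⟨j, hjmem⟩ := (Set.ncard_pos (Set.toFinite _)).mp (hres r.toNat hrn)
        have hj : γv j % (m : ℤ) = r := by
          have := hjmem
          simp only [Set.mem_setOf_eq] at this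
          rw [this]; omega
        refine ⟨j, ?_⟩
        have h1 : (m : ℤ) ∣ (γv i - d) - r := Int.dvd_self_sub_of_emod_eq rfl
        have h2 : (m : ℤ) ∣ γv j - r := Int.dvd_self_sub_of_emod_eq hj
        have : (-(γv i) + d + γv j) = (γv j - r) - ((γv i - d) - r) := by ring
        rw [this]
        exact dvd_sub h2 h1
      choose τ hτ using hchoice
      have hk : ∀ i : Fin n, ∃ k : ℤ, (m : ℤ) * k = -(γv i) + d + γv (τ i) := by
        intro i
        obtain ⟨k, hk⟩ := hτ i
        exact ⟨k, hk.symm⟩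
      choose kf hkf using hk
      have h1 : (1 : Matrix (Fin n) (Fin n) (AddMonoidAlgebra K ℤ)) =
          ∑ i : Fin n,
            Matrix.single i (τ i) (AddMonoidAlgebra.single (kf i) (1 : K)) *
            Matrix.single (τ i) i (AddMonoidAlgebra.single (-(kf i)) (1 : K)) := by
        have heach : ∀ i : Fin n,
            Matrix.single i (τ i) (AddMonoidAlgebra.single (kf i) (1 : K)) *
            Matrix.single (τ i) i (AddMonoidAlgebra.single (-(kf i)) (1 : K)) =
            Matrix.single i i (1 : AddMonoidAlgebra K ℤ) := by
          intro i
          rw [Matrix.single_mul_single_same]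
          rw [AddMonoidAlgebra.single_mul_single, add_neg_cancel, one_mul,
            AddMonoidAlgebra.one_def]
        rw [Finset.sum_congr rfl fun i _ => heach i]
        refine Matrix.ext fun p q => ?_
        rw [Matrix.sum_apply p q]
        by_cases h : p = q
        · subst h
          rw [Matrix.one_apply_eq]
          rw [Finset.sum_eq_single p (fun i _ hip =>
            Matrix.single_apply_of_ne i i (1 : AddMonoidAlgebra K ℤ) p p
              (fun hcon => hip hcon.1)) (fun hp => absurd (Finset.mem_univ p) hp)]
          rw [Matrix.single_apply_same]
        · rw [Matrix.one_apply_ne h]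
          exact (Finset.sum_eq_zero fun i _ =>
            Matrix.single_apply_of_ne i i (1 : AddMonoidAlgebra K ℤ) p q
              (fun hcon => h (hcon.1.symm.trans hcon.2))).symm
      rw [h1]
      refine AddSubgroup.sum_mem _ fun i _ => AddSubgroup.subset_closure ?_
      refine Set.mul_mem_mul (stdBasis_mem (hkf i) 1) (stdBasis_mem ?_ 1)
      have := hkf i
      linarith
    intro a b x hx
    have h1 : (1 : Matrix (Fin n) (Fin n) (AddMonoidAlgebra K ℤ)) ∈
        AddSubgroup.closure ((c (-b) : Set _) * (c b : Set _)) := by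
      have := key (-b)
      rwa [neg_neg] at this
    have hmap := AddSubgroup.mem_map_of_mem (AddMonoidHom.mulLeft x) h1
    rw [AddMonoidHom.map_closure] at hmap
    have hx1 : (AddMonoidHom.mulLeft x) 1 = x := mul_one x
    rw [hx1] at hmap
    refine AddSubgroup.closure_mono ?_ hmap
    rintro w ⟨z, hz, rfl⟩
    rw [Set.mem_mul] at hz
    obtain ⟨u, hu, v, hv, rfl⟩ := hz
    have hxu : x * u ∈ c a := by
      have := mc_mul hx hu
      rwa [show a + b + -b = a by ring] at this
    have heq : (AddMonoidHom.mulLeft x) (u * v) = (x * u) * v := (mul_assoc x u v).symm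
    rw [heq]
    exact Set.mul_mem_mul hxu hv
end
end
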